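/- Let β ∈ ℝ, H a Hermitian operator on a finite-dimensional Hilbert space, and ρ = e^{-βH}/tr(e^{-βH}) the Gibbs state. Then for every N ∈ ℕ and every unitary U on ℋ^{⊗N} (with β > 0), the extracted work is non-positive: tr(ρ^{⊗N}H^{(N)}) - tr(Uρ^{⊗N}U†H^{(N)}) = -(1/β)·S(Uρ^{⊗N}U† ‖ ρ^{⊗N}) ≤ 0, where S(σ‖τ) = tr(σ(log σ - log τ)) is the quantum relative entropy and H^{(N)} = ∑_k I^{⊗(k-1)}⊗H⊗I^{⊗(N-k)}. -/

import Mathlib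

open Matrix ComplexOrder

/-- The operator acting as `H` on site `k` and as the identity elsewhere. -/
def siteOp {n : Type*} [Fintype n] [DecidableEq n] {ι : Type*} [Fintype ι] [DecidableEq ι]
    (H : Matrix n n ℂ) (k : ι) : Matrix (ι → n) (ι → n) ℂ :=
  Matrix.of fun a b => (if ∀ j, j ≠ k → a j = b j then 1 else 0) * H (a k) (b k)

/-- The extensive Hamiltonian `H^{(N)} = ∑_k I^{⊗(k-1)}⊗H⊗I^{⊗(N-k)}`. -/
noncomputable def extOp {n : Type*} [Fintype n] [DecidableEq n]
    (H : Matrix n n ℂ) (ι : Type*) [Fintype ι] [DecidableEq ι] :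
    Matrix (ι → n) (ι → n) ℂ :=
  ∑ k : ι, siteOp H k

/-- The tensor power `ρ^{⊗N}` of a state. -/
noncomputable def tensorState {n : Type*} [Fintype n]
    (ρ : Matrix n n ℂ) (ι : Type*) [Fintype ι] : Matrix (ι → n) (ι → n) ℂ :=
  Matrix.of fun a b => ∏ s : ι, ρ (a s) (b s)

/-- The logarithm of a Hermitian matrix, via its spectral decomposition. -/
noncomputable def matLog {n : Type*} [Fintype n] [DecidableEq n]
    (A : Matrix n n ℂ) (hA : A.IsHermitian) : Matrix n n ℂ :=
  (hA.eigenvectorUnitary : Matrix n n ℂ) *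
    Matrix.diagonal (fun i => (Real.log (hA.eigenvalues i) : ℂ)) *
    star (hA.eigenvectorUnitary : Matrix n n ℂ)


section GibbsAux

set_option linter.unusedSectionVars false

variable {n : Type*} [Fintype n] [DecidableEq n] {ι : Type*} [Fintype ι] [DecidableEq ι]
variable {m : Type*} [Fintype m] [DecidableEq m]

lemma sum_update_aux (a : ι → n) (k : ι) (g : (ι → n) → ℂ) :
    ∑ c : ι → n, (if ∀ j, j ≠ k → a j = c j then 1 else 0) * g c
      = ∑ x : n, g (Function.update a k x) := by
  classical
  have h1 : ∀ c : ι → n, (if ∀ j, j ≠ k → a j = c j then (1:ℂ) else 0) * g c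
      = if (∀ j, j ≠ k → a j = c j) then g c else 0 := by
    intro c; split <;> simp
  simp_rw [h1]
  rw [← Finset.sum_filter]
  have h2 : Finset.univ.filter (fun c : ι → n => ∀ j, j ≠ k → a j = c j)
      = Finset.univ.image (Function.update a k) := by
    ext c
    simp only [Finset.mem_filter, Finset.mem_univ, true_and]
    constructor
    · intro h
      refine Finset.mem_image.mpr ⟨c k, Finset.mem_univ _, funext fun j => ?_⟩
      rcases eq_or_ne j k with rfl | hj
      · simp
      · rw [Function.update_of_ne hj]; exact h j hj
    · intro h
      obtain ⟨x, -, rfl⟩ := Finset.mem_image.mp h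
      intro j hj
      rw [Function.update_of_ne hj]
  rw [h2, Finset.sum_image (by intro x _ y _ h; simpa using congr_fun h k)]

lemma siteOp_mul_apply (A : Matrix n n ℂ) (k : ι) (X : Matrix (ι → n) (ι → n) ℂ)
    (a b : ι → n) :
    (siteOp A k * X) a b = ∑ x : n, A (a k) x * X (Function.update a k x) b := by
  rw [Matrix.mul_apply]
  have h := sum_update_aux a k (fun c => A (a k) (c k) * X c b)
  simp only [Function.update_self] at h
  rw [← h]
  apply Finset.sum_congr rfl
  intro c _
  simp only [siteOp, Matrix.of_apply]
  ring

lemma siteOp_one (k : ι) : siteOp (1 : Matrix n n ℂ) k = 1 := by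
  ext a b
  simp only [siteOp, Matrix.of_apply, Matrix.one_apply]
  by_cases h : a = b
  · subst h; simp
  · rw [if_neg h]
    by_cases h1 : ∀ j, j ≠ k → a j = b j
    · rw [if_pos h1, one_mul, if_neg fun hk => h (funext fun j => by
        rcases eq_or_ne j k with rfl | hj
        · exact hk
        · exact h1 j hj)]
    · rw [if_neg h1, zero_mul]

lemma siteOp_mul_same (A B : Matrix n n ℂ) (k : ι) :
    siteOp A k * siteOp B k = siteOp (A * B) k := by
  ext a b
  rw [siteOp_mul_apply]
  simp only [siteOp, Matrix.of_apply, Matrix.mul_apply, Function.update_self]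
  have hcond : ∀ x : n, (∀ j, j ≠ k → Function.update a k x j = b j)
      ↔ (∀ j, j ≠ k → a j = b j) := by
    intro x
    constructor <;> intro h j hj
    · rw [← h j hj, Function.update_of_ne hj]
    · rw [Function.update_of_ne hj]; exact h j hj
  rw [Finset.mul_sum]
  apply Finset.sum_congr rfl
  intro x _
  rw [if_congr (hcond x) rfl rfl]
  ring

lemma siteOp_add (A B : Matrix n n ℂ) (k : ι) :
    siteOp (A + B) k = siteOp A k + siteOp B k := by
  ext a b; simp [siteOp, mul_add]

lemma siteOp_smul (c : ℂ) (A : Matrix n n ℂ) (k : ι) :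
    siteOp (c • A) k = c • siteOp A k := by
  ext a b; simp [siteOp]

noncomputable def siteHom (k : ι) : Matrix n n ℂ →ₐ[ℂ] Matrix (ι → n) (ι → n) ℂ where
  toFun A := siteOp A k
  map_one' := siteOp_one k
  map_mul' A B := (siteOp_mul_same A B k).symm
  map_zero' := by ext a b; simp [siteOp]
  map_add' A B := siteOp_add A B k
  commutes' c := by
    show siteOp ((algebraMap ℂ (Matrix n n ℂ)) c) k = _
    rw [Algebra.algebraMap_eq_smul_one, siteOp_smul, siteOp_one,
      Algebra.algebraMap_eq_smul_one]

lemma exp_siteOp (A : Matrix n n ℂ) (k : ι) :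
    NormedSpace.exp (siteOp A k) = siteOp (NormedSpace.exp A) k := by
  letI : SeminormedRing (Matrix n n ℂ) := Matrix.linftyOpSemiNormedRing
  letI : NormedRing (Matrix n n ℂ) := Matrix.linftyOpNormedRing
  letI : NormedAlgebra ℂ (Matrix n n ℂ) := Matrix.linftyOpNormedAlgebra
  letI : SeminormedRing (Matrix (ι → n) (ι → n) ℂ) := Matrix.linftyOpSemiNormedRing
  letI : NormedRing (Matrix (ι → n) (ι → n) ℂ) := Matrix.linftyOpNormedRing
  letI : NormedAlgebra ℂ (Matrix (ι → n) (ι → n) ℂ) := Matrix.linftyOpNormedAlgebra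
  letI : NormedAlgebra ℚ (Matrix n n ℂ) := Matrix.linftyOpNormedAlgebra
  letI : NormedAlgebra ℚ (Matrix (ι → n) (ι → n) ℂ) := Matrix.linftyOpNormedAlgebra
  have hc : Continuous (siteHom (n := n) (ι := ι) k) :=
    LinearMap.continuous_of_finiteDimensional (siteHom (n := n) (ι := ι) k).toLinearMap
  exact (NormedSpace.map_exp (siteHom (n := n) (ι := ι) k) hc A).symm


lemma siteOp_mul_of_ne (A B : Matrix n n ℂ) {k l : ι} (h : k ≠ l) :
    siteOp A k * siteOp B l =
      Matrix.of fun a b =>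
        (if ∀ j, j ≠ k → j ≠ l → a j = b j then 1 else 0)
          * (A (a k) (b k) * B (a l) (b l)) := by
  ext a b
  rw [siteOp_mul_apply]
  simp only [siteOp, Matrix.of_apply]
  rw [Finset.sum_eq_single_of_mem (b k) (Finset.mem_univ _)]
  · rw [Function.update_of_ne h.symm]
    have hcond : (∀ j, j ≠ l → Function.update a k (b k) j = b j)
        ↔ (∀ j, j ≠ k → j ≠ l → a j = b j) := by
      constructor
      · intro hc j hjk hjl
        rw [← hc j hjl, Function.update_of_ne hjk]
      · intro hc j hjl
        rcases eq_or_ne j k with rfl | hjk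
        · simp
        · rw [Function.update_of_ne hjk]; exact hc j hjk hjl
    rw [if_congr hcond rfl rfl]
    ring
  · intro x _ hx
    have hne : ¬ (∀ j, j ≠ l → Function.update a k x j = b j) := fun hc => hx (by
      have := hc k h
      rwa [Function.update_self] at this)
    rw [if_neg hne, zero_mul, mul_zero]

lemma siteOp_commute (A B : Matrix n n ℂ) {k l : ι} (h : k ≠ l) :
    Commute (siteOp A k) (siteOp B l) := by
  unfold Commute SemiconjBy
  rw [siteOp_mul_of_ne A B h, siteOp_mul_of_ne B A h.symm]
  ext a b
  simp only [Matrix.of_apply]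
  have hiff : (∀ j, j ≠ l → j ≠ k → a j = b j) ↔ (∀ j, j ≠ k → j ≠ l → a j = b j) :=
    ⟨fun h' j h1 h2 => h' j h2 h1, fun h' j h1 h2 => h' j h2 h1⟩
  rw [if_congr hiff rfl rfl]
  ring

lemma noncommProd_siteOp (E : Matrix n n ℂ) (s : Finset ι) :
    ∀ (hc : (s : Set ι).Pairwise (Function.onFun Commute fun k => siteOp (n := n) (ι := ι) E k)),
    s.noncommProd (fun k => siteOp E k) hc =
      Matrix.of fun a b =>
        (if ∀ j, j ∉ s → a j = b j then 1 else 0) * ∏ k ∈ s, E (a k) (b k) := by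
  classical
  induction s using Finset.induction_on with
  | empty =>
    intro hc
    rw [Finset.noncommProd_empty]
    ext a b
    simp only [Matrix.of_apply, Finset.prod_empty, mul_one]
    rw [Matrix.one_apply]
    have hiff : (∀ j, j ∉ (∅ : Finset ι) → a j = b j) ↔ a = b :=
      ⟨fun h => funext fun j => h j (Finset.notMem_empty j), fun h j _ => congr_fun h j⟩
    rw [if_congr hiff rfl rfl]
  | @insert k s hk ih =>
    intro hc
    rw [Finset.noncommProd_insert_of_notMem _ _ _ _ hk]
    rw [ih (hc.mono (by simp only [Finset.coe_insert]; exact Set.subset_insert _ _))]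
    ext a b
    rw [siteOp_mul_apply]
    simp only [Matrix.of_apply]
    rw [Finset.sum_eq_single_of_mem (b k) (Finset.mem_univ _)]
    · have hprod : ∏ i ∈ s, E (Function.update a k (b k) i) (b i)
          = ∏ i ∈ s, E (a i) (b i) :=
        Finset.prod_congr rfl fun i hi => by
          rw [Function.update_of_ne (ne_of_mem_of_not_mem hi hk)]
      rw [hprod]
      have hcond : (∀ j, j ∉ s → Function.update a k (b k) j = b j)
          ↔ (∀ j, j ∉ insert k s → a j = b j) := by
        constructor
        · intro h j hj
          have hjk : j ≠ k := fun e => hj (e ▸ Finset.mem_insert_self k s)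
          have hjs : j ∉ s := fun e => hj (Finset.mem_insert_of_mem e)
          rw [← h j hjs, Function.update_of_ne hjk]
        · intro h j hj
          rcases eq_or_ne j k with rfl | hjk
          · simp
          · rw [Function.update_of_ne hjk]
            exact h j (by simp [hjk, hj])
      rw [if_congr hcond rfl rfl, Finset.prod_insert hk]
      ring
    · intro x _ hx
      have hne : ¬ (∀ j, j ∉ s → Function.update a k x j = b j) := fun hcd => hx (by
        have := hcd k hk
        rwa [Function.update_self] at this)
      rw [if_neg hne, zero_mul, mul_zero]

lemma exp_sum_siteOp (B : Matrix n n ℂ) :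
    NormedSpace.exp (∑ k : ι, siteOp (n := n) B k)
      = tensorState (NormedSpace.exp B) ι := by
  have hcomm : ((Finset.univ : Finset ι) : Set ι).Pairwise
      (Function.onFun Commute fun k => siteOp (n := n) (ι := ι) B k) :=
    fun k _ l _ hkl => siteOp_commute B B hkl
  rw [Matrix.exp_sum_of_commute Finset.univ _ hcomm]
  have hcomm1 : ((Finset.univ : Finset ι) : Set ι).Pairwise
      (Function.onFun Commute fun k => NormedSpace.exp (siteOp (n := n) (ι := ι) B k)) := by
    intro k _ l _ hkl
    show Commute (NormedSpace.exp (siteOp B k)) (NormedSpace.exp (siteOp B l))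
    rw [exp_siteOp, exp_siteOp]
    exact siteOp_commute _ _ hkl
  rw [Finset.noncommProd_congr rfl (fun k _ => exp_siteOp B k) hcomm1]
  refine (noncommProd_siteOp (NormedSpace.exp B) Finset.univ _).trans ?_
  ext a b
  simp [tensorState]

lemma tensorState_smul (c : ℂ) (E : Matrix n n ℂ) :
    tensorState (c • E) ι = c ^ (Fintype.card ι) • tensorState E ι := by
  ext a b
  simp only [tensorState, Matrix.of_apply, Matrix.smul_apply, smul_eq_mul]
  rw [Finset.prod_mul_distrib, Finset.prod_const, Finset.card_univ]

lemma siteOp_isHermitian {H : Matrix n n ℂ} (hH : H.IsHermitian) (k : ι) :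
    (siteOp H k).IsHermitian := by
  ext a b
  simp only [Matrix.conjTranspose_apply, siteOp, Matrix.of_apply, star_mul']
  have h1 : (∀ j, j ≠ k → b j = a j) ↔ (∀ j, j ≠ k → a j = b j) :=
    ⟨fun h j hj => (h j hj).symm, fun h j hj => (h j hj).symm⟩
  have h2 : star (if ∀ j, j ≠ k → b j = a j then (1:ℂ) else 0)
      = if ∀ j, j ≠ k → b j = a j then (1:ℂ) else 0 := by split <;> simp
  rw [h2, if_congr h1 rfl rfl]
  congr 1
  have := congr_fun (congr_fun hH (a k)) (b k)
  rwa [Matrix.conjTranspose_apply] at this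

lemma star_eq_inv_of_mem_unitary {V : Matrix m m ℂ} (hV : V ∈ Matrix.unitaryGroup m ℂ) :
    star V = V⁻¹ :=
  (Matrix.inv_eq_left_inv (Matrix.mem_unitaryGroup_iff'.mp hV)).symm

lemma exp_unitary_conj_diag {V : Matrix m m ℂ} (hV : V ∈ Matrix.unitaryGroup m ℂ)
    (d : m → ℝ) :
    NormedSpace.exp (V * Matrix.diagonal (fun i => (d i : ℂ)) * star V)
      = V * Matrix.diagonal (fun i => (Real.exp (d i) : ℂ)) * star V := by
  have hu : IsUnit V :=
    ⟨⟨V, star V, Matrix.mem_unitaryGroup_iff.mp hV, Matrix.mem_unitaryGroup_iff'.mp hV⟩, rfl⟩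
  rw [star_eq_inv_of_mem_unitary hV, Matrix.exp_conj V _ hu, Matrix.exp_diagonal]
  have hfun : (NormedSpace.exp fun i => ((d i : ℂ))) = fun i => ((Real.exp (d i) : ℂ)) := by
    funext i
    rw [Pi.coe_exp, Complex.ofReal_exp, Complex.exp_eq_exp_ℂ]
  rw [hfun]

lemma trace_unitary_conj {V : Matrix m m ℂ} (hV : V ∈ Matrix.unitaryGroup m ℂ)
    (D : Matrix m m ℂ) : (V * D * star V).trace = D.trace := by
  rw [Matrix.trace_mul_comm, ← Matrix.mul_assoc, Matrix.mem_unitaryGroup_iff'.mp hV,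
    Matrix.one_mul]

lemma isUnit_of_mem_unitary {V : Matrix m m ℂ} (hV : V ∈ Matrix.unitaryGroup m ℂ) :
    IsUnit V :=
  ⟨⟨V, star V, Matrix.mem_unitaryGroup_iff.mp hV, Matrix.mem_unitaryGroup_iff'.mp hV⟩, rfl⟩

lemma posDef_unitary_conj {V : Matrix m m ℂ} (hV : V ∈ Matrix.unitaryGroup m ℂ)
    {g : m → ℝ} (hg : ∀ i, 0 < g i) :
    (V * Matrix.diagonal (fun i => (g i : ℂ)) * star V).PosDef := by
  set D : Matrix m m ℂ := Matrix.diagonal (fun i => (g i : ℂ)) with hD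
  have hd : D.PosDef := by
    rw [hD, Matrix.posDef_diagonal_iff]; intro i; exact_mod_cast hg i
  have hsd : (V * D * star V).PosSemidef := by
    have h := hd.posSemidef.mul_mul_conjTranspose_same V
    rwa [Matrix.star_eq_conjTranspose]
  have hDu : IsUnit D := by
    rw [Matrix.isUnit_iff_isUnit_det, hD, Matrix.det_diagonal]
    simp only [isUnit_iff_ne_zero]
    exact Finset.prod_ne_zero_iff.mpr fun i _ =>
      Complex.ofReal_ne_zero.mpr (hg i).ne'
  have hMu : IsUnit (V * D * star V) :=
    ((isUnit_of_mem_unitary hV).mul hDu).mul (isUnit_of_mem_unitary (Unitary.star_mem hV))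
  exact (Matrix.IsUnit.posDef_star_right_conjugate_iff (isUnit_of_mem_unitary hV)).mpr hd


noncomputable def conjAlgHom (V : Matrix m m ℂ) (hV : V ∈ Matrix.unitaryGroup m ℂ) :
    Matrix m m ℂ →ₐ[ℂ] Matrix m m ℂ where
  toFun X := V * X * star V
  map_one' := by show V * 1 * star V = 1; rw [Matrix.mul_one]; exact Matrix.mem_unitaryGroup_iff.mp hV
  map_mul' X Y := by
    have h1 : star V * V = 1 := Matrix.mem_unitaryGroup_iff'.mp hV
    calc V * (X * Y) * star V = V * X * (star V * V) * Y * star V := by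
          rw [h1]; noncomm_ring
      _ = V * X * star V * (V * Y * star V) := by noncomm_ring
  map_zero' := by show V * 0 * star V = 0; rw [Matrix.mul_zero, Matrix.zero_mul]
  map_add' X Y := by show V * (X + Y) * star V = V * X * star V + V * Y * star V; rw [Matrix.mul_add, Matrix.add_mul]
  commutes' c := by
    show V * algebraMap ℂ (Matrix m m ℂ) c * star V = algebraMap ℂ (Matrix m m ℂ) c
    rw [Algebra.algebraMap_eq_smul_one, Matrix.mul_smul,
      Matrix.mul_one, Matrix.smul_mul, Matrix.mem_unitaryGroup_iff.mp hV]

lemma aeval_conj (V : Matrix m m ℂ) (hV : V ∈ Matrix.unitaryGroup m ℂ)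
    (X : Matrix m m ℂ) (q : Polynomial ℂ) :
    Polynomial.aeval (V * X * star V) q = V * Polynomial.aeval X q * star V :=
  Polynomial.aeval_algHom_apply (conjAlgHom V hV) X q

lemma aeval_diagonal (v : m → ℂ) (q : Polynomial ℂ) :
    Polynomial.aeval (Matrix.diagonal v) q
      = Matrix.diagonal (fun i => Polynomial.aeval (v i) q) := by
  have h1 : Polynomial.aeval (Matrix.diagonal v) q = Matrix.diagonal (Polynomial.aeval v q) :=
    Polynomial.aeval_algHom_apply (Matrix.diagonalAlgHom ℂ) v q
  rw [h1]
  have h2 : Polynomial.aeval v q = fun i => Polynomial.aeval (v i) q := by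
    funext i
    exact (Polynomial.aeval_algHom_apply (Pi.evalAlgHom ℂ (fun _ => ℂ) i) v q).symm
  rw [h2]

lemma aeval_ofReal (p : Polynomial ℝ) (x : ℝ) :
    Polynomial.aeval ((x : ℂ)) (p.map (algebraMap ℝ ℂ)) = ((p.eval x : ℝ) : ℂ) := by
  rw [Polynomial.aeval_map_algebraMap, ← Complex.coe_algebraMap,
    Polynomial.aeval_algebraMap_apply_eq_algebraMap_eval]

lemma matLog_conj {A : Matrix m m ℂ} (hA : A.IsHermitian) (V : Matrix m m ℂ)
    (hV : V ∈ Matrix.unitaryGroup m ℂ) (g : m → ℝ)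
    (hAe : A = V * Matrix.diagonal (fun i => (g i : ℂ)) * star V) :
    matLog A hA = V * Matrix.diagonal (fun i => (Real.log (g i) : ℂ)) * star V := by
  classical
  set T : Finset ℝ := Finset.image g Finset.univ ∪ Finset.image hA.eigenvalues Finset.univ
    with hT
  set p : Polynomial ℝ := Lagrange.interpolate T id Real.log with hp
  have hpeval : ∀ x ∈ T, p.eval x = Real.log x := by
    intro x hx
    have h := Lagrange.eval_interpolate_at_node (v := id) (s := T) Real.log
      (Set.injOn_id _) hx
    exact h
  set q := p.map (algebraMap ℝ ℂ) with hq
  have key : ∀ (W : Matrix m m ℂ), W ∈ Matrix.unitaryGroup m ℂ → ∀ (d : m → ℝ),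
      (∀ i, d i ∈ T) →
      Polynomial.aeval (W * Matrix.diagonal (fun i => (d i : ℂ)) * star W) q
        = W * Matrix.diagonal (fun i => (Real.log (d i) : ℂ)) * star W := by
    intro W hW d hd
    have hfun : (fun i => Polynomial.aeval ((d i : ℂ)) q) = fun i => (Real.log (d i) : ℂ) :=
      funext fun i => by rw [hq, aeval_ofReal, hpeval _ (hd i)]
    rw [aeval_conj W hW, aeval_diagonal, hfun]
  have h1 := key V hV g
    (fun i => Finset.mem_union_left _ (Finset.mem_image_of_mem g (Finset.mem_univ i)))
  have h2 := key (hA.eigenvectorUnitary : Matrix m m ℂ) (hA.eigenvectorUnitary).2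
    hA.eigenvalues
    (fun i => Finset.mem_union_right _ (Finset.mem_image_of_mem _ (Finset.mem_univ i)))
  have hsp : A = (hA.eigenvectorUnitary : Matrix m m ℂ)
      * Matrix.diagonal (fun i => ((hA.eigenvalues i : ℝ) : ℂ))
      * star (hA.eigenvectorUnitary : Matrix m m ℂ) := hA.spectral_theorem
  rw [← hAe] at h1
  rw [← hsp] at h2
  unfold matLog
  rw [← h2]
  exact h1


lemma log_ineq {p q : ℝ} (hp : 0 < p) (hq : 0 < q) :
    p - q ≤ p * (Real.log p - Real.log q) := by
  have h := Real.log_le_sub_one_of_pos (show 0 < q / p by positivity)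
  rw [Real.log_div hq.ne' hp.ne'] at h
  have h2 := mul_le_mul_of_nonneg_left h hp.le
  have h3 : p * (q / p - 1) = q - p := by field_simp
  rw [h3, mul_sub] at h2
  nlinarith [h2]

lemma unitary_row_sum {M : Matrix m m ℂ} (hM : M ∈ Matrix.unitaryGroup m ℂ) (i : m) :
    ∑ j, Complex.normSq (M i j) = 1 := by
  have h := Matrix.mem_unitaryGroup_iff.mp hM
  have h2 := congr_fun (congr_fun h i) i
  rw [Matrix.mul_apply] at h2
  have h3 : ∀ j, M i j * (star M) j i = ((Complex.normSq (M i j) : ℝ) : ℂ) := fun j => by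
    rw [Matrix.star_eq_conjTranspose, Matrix.conjTranspose_apply]
    exact Complex.mul_conj _
  rw [Finset.sum_congr rfl (fun j _ => h3 j), Matrix.one_apply_eq] at h2
  have h4 := congr_arg Complex.re h2
  rw [Complex.re_sum] at h4
  simpa using h4

lemma unitary_col_sum {M : Matrix m m ℂ} (hM : M ∈ Matrix.unitaryGroup m ℂ) (j : m) :
    ∑ i, Complex.normSq (M i j) = 1 := by
  have h := Matrix.mem_unitaryGroup_iff'.mp hM
  have h2 := congr_fun (congr_fun h j) j
  rw [Matrix.mul_apply] at h2
  have h3 : ∀ i, (star M) j i * M i j = ((Complex.normSq (M i j) : ℝ) : ℂ) := fun i => by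
    rw [Matrix.star_eq_conjTranspose, Matrix.conjTranspose_apply, mul_comm]
    exact Complex.mul_conj _
  rw [Finset.sum_congr rfl (fun i _ => h3 i), Matrix.one_apply_eq] at h2
  have h4 := congr_arg Complex.re h2
  rw [Complex.re_sum] at h4
  simpa using h4

lemma re_trace_PMQM (p q : m → ℝ) (M : Matrix m m ℂ) :
    ((Matrix.diagonal (fun i => (p i : ℂ)) * M * Matrix.diagonal (fun j => (q j : ℂ))
        * star M).trace).re
      = ∑ i, ∑ j, (p i * q j) * Complex.normSq (M i j) := by
  have hentry : ∀ i, (Matrix.diagonal (fun i => (p i : ℂ)) * M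
      * Matrix.diagonal (fun j => (q j : ℂ)) * star M) i i
      = ∑ j, (((p i * q j) * Complex.normSq (M i j) : ℝ) : ℂ) := by
    intro i
    rw [Matrix.mul_apply]
    apply Finset.sum_congr rfl
    intro j _
    rw [Matrix.mul_diagonal, Matrix.diagonal_mul, Matrix.star_eq_conjTranspose,
      Matrix.conjTranspose_apply]
    have hc : (M i j) * star (M i j) = ((Complex.normSq (M i j) : ℝ) : ℂ) :=
      Complex.mul_conj (M i j)
    calc (p i : ℂ) * M i j * (q j : ℂ) * star (M i j)
        = (p i : ℂ) * (q j : ℂ) * ((M i j) * star (M i j)) := by ring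
      _ = (((p i * q j) * Complex.normSq (M i j) : ℝ) : ℂ) := by rw [hc]; push_cast; ring
  have htr : (Matrix.diagonal (fun i => (p i : ℂ)) * M * Matrix.diagonal (fun j => (q j : ℂ))
      * star M).trace = ∑ i, ∑ j, (((p i * q j) * Complex.normSq (M i j) : ℝ) : ℂ) := by
    rw [Matrix.trace]
    exact Finset.sum_congr rfl fun i _ => hentry i
  rw [htr, Complex.re_sum]
  apply Finset.sum_congr rfl
  intro i _
  rw [Complex.re_sum]
  exact Finset.sum_congr rfl fun j _ => Complex.ofReal_re _

lemma klein {A B : Matrix m m ℂ} (hA : A.PosDef) (hB : B.PosDef)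
    (h1 : A.IsHermitian) (h2 : B.IsHermitian) :
    (A.trace).re - (B.trace).re ≤ ((A * (matLog A h1 - matLog B h2)).trace).re := by
  classical
  set W : Matrix m m ℂ := (h1.eigenvectorUnitary : Matrix m m ℂ) with hWdef
  set V : Matrix m m ℂ := (h2.eigenvectorUnitary : Matrix m m ℂ) with hVdef
  set p : m → ℝ := h1.eigenvalues with hpdef
  set q : m → ℝ := h2.eigenvalues with hqdef
  have hWu : W ∈ Matrix.unitaryGroup m ℂ := (h1.eigenvectorUnitary).2
  have hVu : V ∈ Matrix.unitaryGroup m ℂ := (h2.eigenvectorUnitary).2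
  have hp : ∀ i, 0 < p i := fun i => hA.eigenvalues_pos i
  have hq : ∀ i, 0 < q i := fun i => hB.eigenvalues_pos i
  have hWW : W * star W = 1 := Matrix.mem_unitaryGroup_iff.mp hWu
  have hsW : star W * W = 1 := Matrix.mem_unitaryGroup_iff'.mp hWu
  have hspA : A = W * Matrix.diagonal (fun i => ((p i : ℝ) : ℂ)) * star W :=
    h1.spectral_theorem
  have hspB : B = V * Matrix.diagonal (fun i => ((q i : ℝ) : ℂ)) * star V :=
    h2.spectral_theorem
  have hlogA : matLog A h1 = W * Matrix.diagonal (fun i => (Real.log (p i) : ℂ)) * star W :=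
    rfl
  have hlogB : matLog B h2 = V * Matrix.diagonal (fun i => (Real.log (q i) : ℂ)) * star V :=
    rfl
  set M : Matrix m m ℂ := star W * V with hMdef
  have hMu : M ∈ Matrix.unitaryGroup m ℂ := mul_mem (Unitary.star_mem hWu) hVu
  have hrow := unitary_row_sum hMu
  have hcol := unitary_col_sum hMu
  -- tr(A log A)
  have ht1 : ((A * matLog A h1).trace).re = ∑ i, p i * Real.log (p i) := by
    have e1 : (W * Matrix.diagonal (fun i => ((p i : ℝ) : ℂ)) * star W)
          * (W * Matrix.diagonal (fun i => (Real.log (p i) : ℂ)) * star W)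
        = W * (Matrix.diagonal (fun i => ((p i : ℝ) : ℂ))
            * Matrix.diagonal (fun i => (Real.log (p i) : ℂ))) * star W := by
      calc (W * Matrix.diagonal (fun i => ((p i : ℝ) : ℂ)) * star W)
            * (W * Matrix.diagonal (fun i => (Real.log (p i) : ℂ)) * star W)
          = W * (Matrix.diagonal (fun i => ((p i : ℝ) : ℂ)) * (star W * W)
              * Matrix.diagonal (fun i => (Real.log (p i) : ℂ))) * star W := by noncomm_ring
        _ = _ := by rw [hsW]; noncomm_ring
    have hmm : A * matLog A h1
        = W * (Matrix.diagonal (fun i => ((p i : ℝ) : ℂ))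
            * Matrix.diagonal (fun i => (Real.log (p i) : ℂ))) * star W := by
      rw [hlogA, ← e1, ← hspA]
    rw [hmm, trace_unitary_conj hWu, Matrix.diagonal_mul_diagonal, Matrix.trace_diagonal,
      Complex.re_sum]
    apply Finset.sum_congr rfl
    intro i _
    rw [← Complex.ofReal_mul]
    exact Complex.ofReal_re _
  -- tr(A log B)
  have ht2 : ((A * matLog B h2).trace).re
      = ∑ i, ∑ j, (p i * Real.log (q j)) * Complex.normSq (M i j) := by
    have hstarM : star M = star V * W := by
      rw [hMdef, Matrix.star_mul, star_star]
    have e1 : W * (Matrix.diagonal (fun i => ((p i : ℝ) : ℂ)) * M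
          * Matrix.diagonal (fun j => (Real.log (q j) : ℂ)) * star M) * star W
        = (W * Matrix.diagonal (fun i => ((p i : ℝ) : ℂ)) * star W)
          * (V * Matrix.diagonal (fun j => (Real.log (q j) : ℂ)) * star V)
          * (W * star W) := by
      rw [hstarM, hMdef]
      noncomm_ring
    rw [hWW, Matrix.mul_one] at e1
    have hmm : A * matLog B h2
        = W * (Matrix.diagonal (fun i => ((p i : ℝ) : ℂ)) * M
            * Matrix.diagonal (fun j => (Real.log (q j) : ℂ)) * star M) * star W := by
      rw [hlogB, e1, ← hspA]
    rw [hmm, trace_unitary_conj hWu, re_trace_PMQM p (fun j => Real.log (q j)) M]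
  -- traces
  have htA : (A.trace).re = ∑ i, p i := by
    rw [hspA, trace_unitary_conj hWu, Matrix.trace_diagonal, Complex.re_sum]
    exact Finset.sum_congr rfl fun i _ => Complex.ofReal_re _
  have htB : (B.trace).re = ∑ j, q j := by
    rw [hspB, trace_unitary_conj hVu, Matrix.trace_diagonal, Complex.re_sum]
    exact Finset.sum_congr rfl fun i _ => Complex.ofReal_re _
  -- assemble
  rw [Matrix.mul_sub, Matrix.trace_sub, Complex.sub_re, ht1, ht2, htA, htB]
  have main : ∑ i, ∑ j, (p i - q j) * Complex.normSq (M i j)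
      ≤ ∑ i, ∑ j, (p i * (Real.log (p i) - Real.log (q j))) * Complex.normSq (M i j) :=
    Finset.sum_le_sum fun i _ => Finset.sum_le_sum fun j _ =>
      mul_le_mul_of_nonneg_right (log_ineq (hp i) (hq j)) (Complex.normSq_nonneg _)
  have hL : (∑ i, ∑ j, (p i - q j) * Complex.normSq (M i j))
      = (∑ i, p i) - ∑ j, q j := by
    have e1 : ∀ i, ∑ j, (p i - q j) * Complex.normSq (M i j)
        = p i - ∑ j, q j * Complex.normSq (M i j) := by
      intro i
      calc ∑ j, (p i - q j) * Complex.normSq (M i j)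
          = ∑ j, (p i * Complex.normSq (M i j) - q j * Complex.normSq (M i j)) := by
            apply Finset.sum_congr rfl; intro j _; ring
        _ = (∑ j, p i * Complex.normSq (M i j)) - ∑ j, q j * Complex.normSq (M i j) :=
            Finset.sum_sub_distrib ..
        _ = p i - ∑ j, q j * Complex.normSq (M i j) := by
            rw [← Finset.mul_sum, hrow i, mul_one]
    calc ∑ i, ∑ j, (p i - q j) * Complex.normSq (M i j)
        = ∑ i, (p i - ∑ j, q j * Complex.normSq (M i j)) :=
          Finset.sum_congr rfl fun i _ => e1 i
      _ = (∑ i, p i) - ∑ i, ∑ j, q j * Complex.normSq (M i j) := Finset.sum_sub_distrib ..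
      _ = (∑ i, p i) - ∑ j, q j := by
          congr 1
          rw [Finset.sum_comm]
          apply Finset.sum_congr rfl
          intro j _
          rw [← Finset.mul_sum, hcol j, mul_one]
  have hR : (∑ i, ∑ j, (p i * (Real.log (p i) - Real.log (q j))) * Complex.normSq (M i j))
      = (∑ i, p i * Real.log (p i))
        - ∑ i, ∑ j, (p i * Real.log (q j)) * Complex.normSq (M i j) := by
    have e1 : ∀ i, ∑ j, (p i * (Real.log (p i) - Real.log (q j))) * Complex.normSq (M i j)
        = p i * Real.log (p i) - ∑ j, (p i * Real.log (q j)) * Complex.normSq (M i j) := by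
      intro i
      calc ∑ j, (p i * (Real.log (p i) - Real.log (q j))) * Complex.normSq (M i j)
          = ∑ j, ((p i * Real.log (p i)) * Complex.normSq (M i j)
              - (p i * Real.log (q j)) * Complex.normSq (M i j)) := by
            apply Finset.sum_congr rfl; intro j _; ring
        _ = (∑ j, (p i * Real.log (p i)) * Complex.normSq (M i j))
            - ∑ j, (p i * Real.log (q j)) * Complex.normSq (M i j) := Finset.sum_sub_distrib ..
        _ = p i * Real.log (p i) - ∑ j, (p i * Real.log (q j)) * Complex.normSq (M i j) := by
            rw [← Finset.mul_sum, hrow i, mul_one]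
    calc (∑ i, ∑ j, (p i * (Real.log (p i) - Real.log (q j))) * Complex.normSq (M i j))
        = ∑ i, (p i * Real.log (p i)
            - ∑ j, (p i * Real.log (q j)) * Complex.normSq (M i j)) :=
          Finset.sum_congr rfl fun i _ => e1 i
      _ = _ := Finset.sum_sub_distrib ..
  linarith [main, hL, hR]


lemma matLog_congr {A B : Matrix m m ℂ} (h : A = B) (hA : A.IsHermitian)
    (hB : B.IsHermitian) : matLog A hA = matLog B hB := by subst h; rfl

lemma extOp_isHermitian {H : Matrix n n ℂ} (hH : H.IsHermitian) :
    (extOp H ι).IsHermitian := by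
  show (extOp H ι)ᴴ = extOp H ι
  rw [extOp, Matrix.conjTranspose_sum]
  exact Finset.sum_congr rfl fun k _ => siteOp_isHermitian hH k


end GibbsAux

set_option maxHeartbeats 1000000

/-- for the Gibbs state `ρ = e^{-βH}/tr(e^{-βH})` with `β > 0`, every
unitary `U` on `ℋ^{⊗N}` extracts non-positive work; indeed the extracted work equals
`-(1/β)·S(Uρ^{⊗N}U† ‖ ρ^{⊗N}) ≤ 0`, where `S(σ‖τ) = tr(σ(log σ - log τ))` is the
quantum relative entropy. -/
theorem gibbs_completely_passive {n : Type*} [Fintype n] [DecidableEq n]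
    (H : Matrix n n ℂ) (hH : H.IsHermitian) (β : ℝ) (hβ : 0 < β) (N : ℕ)
    (U : Matrix (Fin N → n) (Fin N → n) ℂ)
    (hU : U ∈ Matrix.unitaryGroup (Fin N → n) ℂ) :
    let ρ : Matrix n n ℂ :=
      ((NormedSpace.exp ((-(β : ℂ)) • H)).trace)⁻¹ • NormedSpace.exp ((-(β : ℂ)) • H)
    let τ : Matrix (Fin N → n) (Fin N → n) ℂ := tensorState ρ (Fin N)
    let HN : Matrix (Fin N → n) (Fin N → n) ℂ := extOp H (Fin N)
    ∀ (h₁ : (U * τ * Uᴴ).IsHermitian) (h₂ : τ.IsHermitian),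
      ((τ * HN).trace - (U * τ * Uᴴ * HN).trace).re
        = -(1 / β) *
            (((U * τ * Uᴴ) * (matLog (U * τ * Uᴴ) h₁ - matLog τ h₂)).trace).re ∧
      ((τ * HN).trace - (U * τ * Uᴴ * HN).trace).re ≤ 0 := by
  intro ρ τ HN h₁ h₂
  have hρdef : ρ = ((NormedSpace.exp ((-(β : ℂ)) • H)).trace)⁻¹
      • NormedSpace.exp ((-(β : ℂ)) • H) := rfl
  have hτdef : τ = tensorState ρ (Fin N) := rfl
  have hHNdef : HN = extOp H (Fin N) := rfl
  clear_value ρ τ HN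
  by_cases hne : Nonempty n
  · -- main case
    have hM0 : ((-(β : ℂ)) • H).IsHermitian := by
      have hs : star (-(β : ℂ)) = -(β : ℂ) := by
        simp [Complex.star_def, Complex.conj_ofReal]
      show ((-(β : ℂ)) • H)ᴴ = (-(β : ℂ)) • H
      rw [Matrix.conjTranspose_smul, hH.eq, hs]
    set Eb : Matrix n n ℂ := NormedSpace.exp ((-(β : ℂ)) • H) with hEb
    set V0 : Matrix n n ℂ := (hM0.eigenvectorUnitary : Matrix n n ℂ) with hV0
    set μ : n → ℝ := hM0.eigenvalues with hμ
    have hV0u : V0 ∈ Matrix.unitaryGroup n ℂ := (hM0.eigenvectorUnitary).2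
    have hsp0 : (-(β : ℂ)) • H = V0 * Matrix.diagonal (fun i => ((μ i : ℝ) : ℂ)) * star V0 :=
      hM0.spectral_theorem
    have hE : Eb = V0 * Matrix.diagonal (fun i => (Real.exp (μ i) : ℂ)) * star V0 := by
      rw [hEb]
      conv_lhs => rw [hsp0]
      exact exp_unitary_conj_diag hV0u μ
    set z : ℝ := ∑ i, Real.exp (μ i) with hzdef
    have hz0 : 0 < z := Finset.sum_pos (fun i _ => Real.exp_pos _) Finset.univ_nonempty
    have hz : Eb.trace = (z : ℂ) := by
      rw [hE, trace_unitary_conj hV0u, Matrix.trace_diagonal, hzdef]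
      push_cast
      rfl
    have hρ : ρ = ((z⁻¹ : ℝ) : ℂ) • Eb := by
      rw [hρdef, hz, Complex.ofReal_inv]
    have hHNh : HN.IsHermitian := by rw [hHNdef]; exact extOp_isHermitian hH
    set W1 : Matrix (Fin N → n) (Fin N → n) ℂ := (hHNh.eigenvectorUnitary :
      Matrix (Fin N → n) (Fin N → n) ℂ) with hW1
    set d : (Fin N → n) → ℝ := hHNh.eigenvalues with hd
    have hW1u : W1 ∈ Matrix.unitaryGroup (Fin N → n) ℂ := (hHNh.eigenvectorUnitary).2
    have hspHN : HN = W1 * Matrix.diagonal (fun i => ((d i : ℝ) : ℂ)) * star W1 :=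
      hHNh.spectral_theorem
    have hsmulHN : (-(β : ℂ)) • HN
        = W1 * Matrix.diagonal (fun i => ((-β * d i : ℝ) : ℂ)) * star W1 := by
      conv_lhs => rw [hspHN]
      have e : (-(β : ℂ)) • Matrix.diagonal (fun i : Fin N → n => ((d i : ℝ) : ℂ))
          = Matrix.diagonal (fun i : Fin N → n => ((-β * d i : ℝ) : ℂ)) := by
        rw [← Matrix.diagonal_smul]
        have e2 : ((-(β : ℂ)) • fun i : Fin N → n => ((d i : ℝ) : ℂ))
            = fun i : Fin N → n => ((-β * d i : ℝ) : ℂ) := by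
          funext i
          simp only [Pi.smul_apply, smul_eq_mul]
          push_cast
          ring
        rw [e2]
      rw [← e]
      simp only [Matrix.mul_smul, Matrix.smul_mul]
    have hexpHN : NormedSpace.exp ((-(β : ℂ)) • HN)
        = W1 * Matrix.diagonal (fun i => (Real.exp (-β * d i) : ℂ)) * star W1 := by
      rw [hsmulHN]
      exact exp_unitary_conj_diag hW1u _
    have hsum : (-(β : ℂ)) • HN = ∑ k : Fin N, siteOp ((-(β : ℂ)) • H) k := by
      rw [hHNdef, extOp, Finset.smul_sum]
      exact Finset.sum_congr rfl fun k _ => (siteOp_smul _ _ _).symm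
    have htens : tensorState Eb (Fin N) = NormedSpace.exp ((-(β : ℂ)) • HN) := by
      rw [hsum, exp_sum_siteOp]
    set g : (Fin N → n) → ℝ := fun i => z⁻¹ ^ N * Real.exp (-β * d i) with hgdef
    have hg : ∀ i, 0 < g i := fun i => mul_pos (pow_pos (inv_pos.mpr hz0) N) (Real.exp_pos _)
    have hτg : τ = W1 * Matrix.diagonal (fun i => (g i : ℂ)) * star W1 := by
      rw [hτdef, hρ, tensorState_smul, Fintype.card_fin,
        htens, hexpHN]
      have e : (((z⁻¹ : ℝ) : ℂ)) ^ N
            • Matrix.diagonal (fun i : Fin N → n => (Real.exp (-β * d i) : ℂ))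
          = Matrix.diagonal (fun i : Fin N → n => (g i : ℂ)) := by
        rw [← Matrix.diagonal_smul]
        have e2 : ((((z⁻¹ : ℝ) : ℂ)) ^ N • fun i : Fin N → n => (Real.exp (-β * d i) : ℂ))
            = fun i : Fin N → n => (g i : ℂ) := by
          funext i
          simp only [Pi.smul_apply, smul_eq_mul, hgdef]
          push_cast
          ring
        rw [e2]
      rw [← e]
      simp only [Matrix.mul_smul, Matrix.smul_mul]
    have hτPD : τ.PosDef := by rw [hτg]; exact posDef_unitary_conj hW1u hg
    have hlogτraw : matLog τ h₂
        = W1 * Matrix.diagonal (fun i => (Real.log (g i) : ℂ)) * star W1 :=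
      matLog_conj h₂ W1 hW1u g hτg
    set a : ℝ := -((N : ℝ) * Real.log z) with hadef
    have hlogg : ∀ i, Real.log (g i) = a + (-β * d i) := by
      intro i
      rw [hgdef]
      rw [Real.log_mul (pow_ne_zero _ (inv_ne_zero hz0.ne')) (Real.exp_ne_zero _), Real.log_exp, Real.log_pow,
        Real.log_inv, hadef]
      push_cast
      ring
    have hlogτ : matLog τ h₂
        = (a : ℂ) • (1 : Matrix (Fin N → n) (Fin N → n) ℂ) + (-(β : ℂ)) • HN := by
      rw [hlogτraw]
      have e : (fun i : Fin N → n => (Real.log (g i) : ℂ))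
          = fun i => ((a : ℝ) : ℂ) + ((-β * d i : ℝ) : ℂ) := by
        funext i; rw [hlogg i]; push_cast; ring
      have hpart1 : W1 * Matrix.diagonal (fun _ : Fin N → n => ((a : ℝ) : ℂ)) * star W1
          = (a : ℂ) • (1 : Matrix (Fin N → n) (Fin N → n) ℂ) := by
        rw [← Matrix.smul_one_eq_diagonal]
        simp only [Matrix.mul_smul, Matrix.smul_mul, Matrix.mul_one]
        rw [Matrix.mem_unitaryGroup_iff.mp hW1u]
      rw [e]
      rw [show Matrix.diagonal (fun i : Fin N → n => ((a : ℝ) : ℂ) + ((-β * d i : ℝ) : ℂ))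
          = Matrix.diagonal (fun _ : Fin N → n => ((a : ℝ) : ℂ))
            + Matrix.diagonal (fun i : Fin N → n => ((-β * d i : ℝ) : ℂ)) from
        (Matrix.diagonal_add _ _).symm]
      rw [Matrix.mul_add, Matrix.add_mul, hpart1, ← hsmulHN]
    have hUs : Uᴴ = star U := rfl
    have hσg : U * τ * Uᴴ
        = (U * W1) * Matrix.diagonal (fun i => (g i : ℂ)) * star (U * W1) := by
      rw [hτg, Matrix.star_mul, hUs]
      simp only [Matrix.mul_assoc]
    have hUW1u : U * W1 ∈ Matrix.unitaryGroup (Fin N → n) ℂ := mul_mem hU hW1u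
    have hσPD : (U * τ * Uᴴ).PosDef := by rw [hσg]; exact posDef_unitary_conj hUW1u hg
    have hlogσ : matLog (U * τ * Uᴴ) h₁ = U * matLog τ h₂ * Uᴴ := by
      rw [matLog_conj h₁ (U * W1) hUW1u g hσg, hlogτraw, Matrix.star_mul, hUs]
      simp only [Matrix.mul_assoc]
    have hUU : Uᴴ * U = 1 := by rw [hUs]; exact Matrix.mem_unitaryGroup_iff'.mp hU
    have htrconj : ∀ X : Matrix (Fin N → n) (Fin N → n) ℂ, (U * X * Uᴴ).trace = X.trace := by
      intro X
      rw [Matrix.trace_mul_comm, ← Matrix.mul_assoc, hUU, Matrix.one_mul]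
    have htrστ : (U * τ * Uᴴ).trace = τ.trace := htrconj τ
    have htrL : ∀ X : Matrix (Fin N → n) (Fin N → n) ℂ,
        (X * matLog τ h₂).trace = (a : ℂ) * X.trace + (-(β : ℂ)) * (X * HN).trace := by
      intro X
      rw [hlogτ, Matrix.mul_add, Matrix.trace_add, Matrix.mul_smul, Matrix.mul_smul,
        Matrix.mul_one, Matrix.trace_smul, Matrix.trace_smul, smul_eq_mul, smul_eq_mul]
    have hσL : ((U * τ * Uᴴ) * (U * matLog τ h₂ * Uᴴ)).trace = (τ * matLog τ h₂).trace := by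
      have e : (U * τ * Uᴴ) * (U * matLog τ h₂ * Uᴴ) = U * (τ * matLog τ h₂) * Uᴴ := by
        calc (U * τ * Uᴴ) * (U * matLog τ h₂ * Uᴴ)
            = U * τ * (Uᴴ * U) * (matLog τ h₂ * Uᴴ) := by
              simp only [Matrix.mul_assoc]
          _ = U * (τ * matLog τ h₂) * Uᴴ := by
              rw [hUU, Matrix.mul_one]
              simp only [Matrix.mul_assoc]
      rw [e, htrconj]
    have hSkey : ((U * τ * Uᴴ) * (matLog (U * τ * Uᴴ) h₁ - matLog τ h₂)).trace
        = (-(β : ℂ)) * ((τ * HN).trace - (U * τ * Uᴴ * HN).trace) := by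
      rw [hlogσ, Matrix.mul_sub, Matrix.trace_sub, hσL, htrL τ, htrL (U * τ * Uᴴ), htrστ]
      ring
    have hre : (((U * τ * Uᴴ) * (matLog (U * τ * Uᴴ) h₁ - matLog τ h₂)).trace).re
        = -β * (((τ * HN).trace - (U * τ * Uᴴ * HN).trace)).re := by
      rw [hSkey, show (-(β : ℂ)) = ((-β : ℝ) : ℂ) by push_cast; ring, Complex.re_ofReal_mul]
    have h0 : 0 ≤ (((U * τ * Uᴴ) * (matLog (U * τ * Uᴴ) h₁ - matLog τ h₂)).trace).re := by
      have hK := klein hσPD hτPD h₁ h₂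
      rw [htrστ] at hK
      simpa using hK
    constructor
    · rw [hre]
      field_simp
    · nlinarith [h0, hre, hβ]
  · have hempty : IsEmpty n := not_nonempty_iff.mp hne
    rcases Nat.eq_zero_or_pos N with hN | hN
    · subst hN
      have hτ1 : τ = 1 := by
        rw [hτdef]
        ext a b
        have hab : a = b := Subsingleton.elim a b
        subst hab
        simp [tensorState]
      have hHN0 : HN = 0 := by
        rw [hHNdef, extOp]
        simp
      have hστ : U * τ * Uᴴ = τ := by
        rw [hτ1, Matrix.mul_one]
        exact Matrix.mem_unitaryGroup_iff.mp hU
      have hdiff : matLog (U * τ * Uᴴ) h₁ = matLog τ h₂ := matLog_congr hστ h₁ h₂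
      constructor
      · rw [hdiff, sub_self, Matrix.mul_zero, hHN0]
        simp
      · rw [hHN0]
        simp
    · have hie : IsEmpty (Fin N → n) := ⟨fun f => hempty.false (f ⟨0, hN⟩)⟩
      have htr0 : ∀ X : Matrix (Fin N → n) (Fin N → n) ℂ, X.trace = 0 := fun X => by
        rw [Matrix.trace]
        simp
      constructor
      · rw [htr0, htr0, htr0]
        simp
      · rw [htr0, htr0]
        simp
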